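/- For x, y ∈ ℝⁿ with positive entries: x majorizes y implies x weakly supermajorizes y; x weakly supermajorizes y implies x is p-larger than y; and x is p-larger than y implies x reciprocally majorizes y. -/

import Mathlib

open Finset

/-- `x` majorizes `y`. -/
def Majorizes {n : ℕ} (x y : Fin n → ℝ) : Prop :=
  (∀ j : Fin n, ∑ i ∈ Finset.Iic j, (x ∘ Tuple.sort x) i ≤
      ∑ i ∈ Finset.Iic j, (y ∘ Tuple.sort y) i) ∧
    ∑ i, x i = ∑ i, y i

/-- `x` weakly supermajorizes `y`. -/
def WSupermaj {n : ℕ} (x y : Fin n → ℝ) : Prop :=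
  ∀ j : Fin n, ∑ i ∈ Finset.Iic j, (x ∘ Tuple.sort x) i ≤
    ∑ i ∈ Finset.Iic j, (y ∘ Tuple.sort y) i

/-- `x` is p-larger than `y`. -/
def PLarger {n : ℕ} (x y : Fin n → ℝ) : Prop :=
  ∀ j : Fin n, ∏ i ∈ Finset.Iic j, (x ∘ Tuple.sort x) i ≤
    ∏ i ∈ Finset.Iic j, (y ∘ Tuple.sort y) i

/-- `x` reciprocally majorizes `y`. -/
def RecipMaj {n : ℕ} (x y : Fin n → ℝ) : Prop :=
  ∀ j : Fin n, ∑ i ∈ Finset.Iic j, 1 / (x ∘ Tuple.sort x) i ≥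
    ∑ i ∈ Finset.Iic j, 1 / (y ∘ Tuple.sort y) i

/-- Bridge: a sum over `Finset.Iic j` in `Fin n` equals a sum over `Finset.range (j+1)`. -/
lemma bridge_sum {n : ℕ} (g : Fin n → ℝ) (G : ℕ → ℝ)
    (hG : ∀ i : Fin n, G i = g i) (j : Fin n) :
    ∑ i ∈ Iic j, g i = ∑ m ∈ range (j.1 + 1), G m := by
  have h : (j.1 + 1) ≤ n := j.2
  rw [← Fin.sum_univ_eq_sum_range]
  refine Finset.sum_nbij' (fun i => (⟨min i.1 j.1, by omega⟩ : Fin (j.1+1)))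
    (fun m => Fin.castLE h m) ?_ ?_ ?_ ?_ ?_
  · intro a ha; exact mem_univ _
  · intro a ha; simp only [mem_Iic, Fin.le_def, Fin.castLE]; omega
  · intro a ha; simp only [mem_Iic, Fin.le_def] at ha
    ext; simp [Nat.min_eq_left ha]
  · intro a ha; ext; simp [Fin.castLE]; omega
  · intro a ha; simp only [mem_Iic, Fin.le_def] at ha
    rw [show ((((fun i => (⟨min i.1 j.1, by omega⟩ : Fin (j.1+1))) a) : Fin (j.1+1)) : ℕ)
      = (a : ℕ) from by simp [Nat.min_eq_left ha], hG]

/-- Bridge: a product over `Finset.Iic j` in `Fin n` equals a product over `Finset.range (j+1)`. -/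
lemma bridge_prod {n : ℕ} (g : Fin n → ℝ) (G : ℕ → ℝ)
    (hG : ∀ i : Fin n, G i = g i) (j : Fin n) :
    ∏ i ∈ Iic j, g i = ∏ m ∈ range (j.1 + 1), G m := by
  have h : (j.1 + 1) ≤ n := j.2
  rw [← Fin.prod_univ_eq_prod_range]
  refine Finset.prod_nbij' (fun i => (⟨min i.1 j.1, by omega⟩ : Fin (j.1+1)))
    (fun m => Fin.castLE h m) ?_ ?_ ?_ ?_ ?_
  · intro a ha; exact mem_univ _
  · intro a ha; simp only [mem_Iic, Fin.le_def, Fin.castLE]; omega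
  · intro a ha; simp only [mem_Iic, Fin.le_def] at ha
    ext; simp [Nat.min_eq_left ha]
  · intro a ha; ext; simp [Fin.castLE]; omega
  · intro a ha; simp only [mem_Iic, Fin.le_def] at ha
    rw [show ((((fun i => (⟨min i.1 j.1, by omega⟩ : Fin (j.1+1))) a) : Fin (j.1+1)) : ℕ)
      = (a : ℕ) from by simp [Nat.min_eq_left ha], hG]

/-- Abel summation nonnegativity: if all partial sums of `d` are nonnegative and the weights
`w` are nonnegative and decreasing, then `∑ d i * w i ≥ 0`. -/
lemma abel' : ∀ (k : ℕ) (d w : ℕ → ℝ), (∀ i ≤ k, 0 ≤ w i) →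
    (∀ i j : ℕ, i ≤ j → j ≤ k → w j ≤ w i) →
    (∀ j ≤ k, 0 ≤ ∑ i ∈ range (j + 1), d i) →
    0 ≤ ∑ i ∈ range (k + 1), d i * w i := by
  intro k
  induction k with
  | zero =>
    intro d w hw _ hd
    simpa using mul_nonneg (by simpa using hd 0 le_rfl) (hw 0 le_rfl)
  | succ k ih =>
    intro d w hw hwa hd
    have key : ∑ i ∈ range (k + 2), d i * w i
        = (∑ i ∈ range (k + 1), d i * (w i - w (k+1)))
          + w (k+1) * ∑ i ∈ range (k + 2), d i := by
      rw [sum_range_succ, sum_range_succ d]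
      have h0 : ∑ i ∈ range (k+1), d i * w i
          = ∑ i ∈ range (k+1), (d i * (w i - w (k+1)) + d i * w (k+1)) :=
        Finset.sum_congr rfl (fun i _ => by ring)
      rw [h0, Finset.sum_add_distrib, ← Finset.sum_mul]
      ring
    rw [key]
    have h1 : 0 ≤ ∑ i ∈ range (k + 1), d i * (w i - w (k+1)) := by
      refine ih d (fun i => w i - w (k+1)) ?_ ?_ ?_
      · intro i hi; have := hwa i (k+1) (by omega) le_rfl; linarith
      · intro i j hij hj; have := hwa i j hij (by omega); linarith
      · intro j hj; exact hd j (by omega)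
    have h2 : 0 ≤ w (k+1) * ∑ i ∈ range (k + 2), d i :=
      mul_nonneg (hw (k+1) le_rfl) (hd (k+1) le_rfl)
    linarith

/-- Domination of partial sums implies domination of the sum of logarithms. -/
lemma log_sum_le (k : ℕ) (u v : ℕ → ℝ)
    (hu : ∀ i ≤ k, 0 < u i) (hv : ∀ i ≤ k, 0 < v i)
    (hvm : ∀ i j : ℕ, i ≤ j → j ≤ k → v i ≤ v j)
    (hs : ∀ j ≤ k, ∑ i ∈ range (j + 1), u i ≤ ∑ i ∈ range (j + 1), v i) :
    ∑ i ∈ range (k + 1), Real.log (u i) ≤ ∑ i ∈ range (k + 1), Real.log (v i) := by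
  have habel : 0 ≤ ∑ i ∈ range (k + 1), (v i - u i) * (1 / v i) := by
    refine abel' k (fun i => v i - u i) (fun i => 1 / v i) ?_ ?_ ?_
    · intro i hi; exact (one_div_pos.mpr (hv i hi)).le
    · intro i j hij hj
      exact one_div_le_one_div_of_le (hv i (le_trans hij hj)) (hvm i j hij hj)
    · intro j hj
      have h1 := hs j hj
      have h2 : ∑ i ∈ range (j+1), (v i - u i)
          = ∑ i ∈ range (j+1), v i - ∑ i ∈ range (j+1), u i :=
        Finset.sum_sub_distrib _ _
      linarith
  have hterm : ∀ i ∈ range (k + 1),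
      (v i - u i) * (1 / v i) ≤ Real.log (v i) - Real.log (u i) := by
    intro i hi
    rw [mem_range] at hi
    have hui := hu i (by omega)
    have hvi := hv i (by omega)
    have h := Real.log_le_sub_one_of_pos (x := u i / v i) (by positivity)
    rw [Real.log_div (ne_of_gt hui) (ne_of_gt hvi)] at h
    have : u i / v i - 1 = -((v i - u i) * (1 / v i)) := by field_simp; ring
    linarith [this ▸ h]
  have := Finset.sum_le_sum hterm
  rw [Finset.sum_sub_distrib] at this
  linarith

/-- Domination of partial products implies reverse domination of sums of reciprocals. -/
lemma recip_sum_le (k : ℕ) (u v : ℕ → ℝ)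
    (hu : ∀ i ≤ k, 0 < u i) (hv : ∀ i ≤ k, 0 < v i)
    (hvm : ∀ i j : ℕ, i ≤ j → j ≤ k → v i ≤ v j)
    (hp : ∀ j ≤ k, ∏ i ∈ range (j + 1), u i ≤ ∏ i ∈ range (j + 1), v i) :
    ∑ i ∈ range (k + 1), 1 / v i ≤ ∑ i ∈ range (k + 1), 1 / u i := by
  have habel : 0 ≤ ∑ i ∈ range (k + 1), (Real.log (v i) - Real.log (u i)) * (1 / v i) := by
    refine abel' k _ (fun i => 1 / v i) ?_ ?_ ?_
    · intro i hi; exact (one_div_pos.mpr (hv i hi)).le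
    · intro i j hij hj
      exact one_div_le_one_div_of_le (hv i (le_trans hij hj)) (hvm i j hij hj)
    · intro j hj
      rw [Finset.sum_sub_distrib, sub_nonneg,
        ← Real.log_prod (fun i hi => (hu i (le_trans (Nat.lt_succ_iff.mp (mem_range.mp hi)) hj)).ne'),
        ← Real.log_prod (fun i hi => (hv i (le_trans (Nat.lt_succ_iff.mp (mem_range.mp hi)) hj)).ne')]
      exact Real.log_le_log (Finset.prod_pos
        (fun i hi => hu i (le_trans (Nat.lt_succ_iff.mp (mem_range.mp hi)) hj))) (hp j hj)
  have hterm : ∀ i ∈ range (k + 1),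
      (Real.log (v i) - Real.log (u i)) * (1 / v i) ≤ 1 / u i - 1 / v i := by
    intro i hi
    rw [mem_range, Nat.lt_succ_iff] at hi
    have hui := hu i hi
    have hvi := hv i hi
    set t := Real.log (v i) - Real.log (u i) with ht
    have hexp : t + 1 ≤ v i / u i := by
      have := Real.add_one_le_exp t
      rwa [ht, Real.exp_sub, Real.exp_log hvi, Real.exp_log hui] at this
    have hkey : 1 / u i - 1 / v i - t * (1 / v i) = (v i / u i - 1 - t) / v i := by
      field_simp
    have : 0 ≤ (v i / u i - 1 - t) / v i := by
      apply div_nonneg _ hvi.le; linarith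
    linarith [hkey ▸ this]
  have := Finset.sum_le_sum hterm
  rw [Finset.sum_sub_distrib] at this
  linarith

theorem majorization_chain {n : ℕ} (x y : Fin n → ℝ)
    (hx : ∀ i, 0 < x i) (hy : ∀ i, 0 < y i) :
    (Majorizes x y → WSupermaj x y) ∧
    (WSupermaj x y → PLarger x y) ∧
    (PLarger x y → RecipMaj x y) := by
  set u : Fin n → ℝ := x ∘ Tuple.sort x with hu
  set v : Fin n → ℝ := y ∘ Tuple.sort y with hv
  set U : ℕ → ℝ := fun m => if h : m < n then u ⟨m, h⟩ else 1 with hUdef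
  set V : ℕ → ℝ := fun m => if h : m < n then v ⟨m, h⟩ else 1 with hVdef
  have hU : ∀ i : Fin n, U i = u i := by
    intro i; simp only [hUdef, i.2, dif_pos, Fin.eta]
  have hV : ∀ i : Fin n, V i = v i := by
    intro i; simp only [hVdef, i.2, dif_pos, Fin.eta]
  have hUpos : ∀ m : ℕ, 0 < U m := by
    intro m; simp only [hUdef]
    split
    · exact hx _
    · norm_num
  have hVpos : ∀ m : ℕ, 0 < V m := by
    intro m; simp only [hVdef]
    split
    · exact hy _
    · norm_num
  have hUmono : ∀ i j : ℕ, i ≤ j → j < n → U i ≤ U j := by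
    intro i j hij hj
    rw [show U i = u ⟨i, by omega⟩ from hU ⟨i, by omega⟩, show U j = u ⟨j, hj⟩ from hU ⟨j, hj⟩]
    exact Tuple.monotone_sort x (by simpa [Fin.le_def] using hij)
  have hVmono : ∀ i j : ℕ, i ≤ j → j < n → V i ≤ V j := by
    intro i j hij hj
    rw [show V i = v ⟨i, by omega⟩ from hV ⟨i, by omega⟩, show V j = v ⟨j, hj⟩ from hV ⟨j, hj⟩]
    exact Tuple.monotone_sort y (by simpa [Fin.le_def] using hij)
  refine ⟨fun h => h.1, ?_, ?_⟩
  · -- WSupermaj → PLarger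
    intro h j
    show ∏ i ∈ Iic j, u i ≤ ∏ i ∈ Iic j, v i
    rw [bridge_prod u U hU j, bridge_prod v V hV j]
    have hk : j.1 < n := j.2
    have hs : ∀ j' ≤ j.1, ∑ i ∈ range (j' + 1), U i ≤ ∑ i ∈ range (j' + 1), V i := by
      intro j' hj'
      have := h ⟨j', by omega⟩
      rwa [bridge_sum u U hU ⟨j', by omega⟩, bridge_sum v V hV ⟨j', by omega⟩] at this
    have hlog := log_sum_le j.1 U V (fun i _ => hUpos i) (fun i _ => hVpos i)
      (fun i j' hij hj' => hVmono i j' hij (by omega)) hs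
    have hUexp : ∏ i ∈ range (j.1 + 1), U i
        = Real.exp (∑ i ∈ range (j.1 + 1), Real.log (U i)) := by
      rw [Real.exp_sum]
      exact Finset.prod_congr rfl (fun i _ => (Real.exp_log (hUpos i)).symm)
    have hVexp : ∏ i ∈ range (j.1 + 1), V i
        = Real.exp (∑ i ∈ range (j.1 + 1), Real.log (V i)) := by
      rw [Real.exp_sum]
      exact Finset.prod_congr rfl (fun i _ => (Real.exp_log (hVpos i)).symm)
    rw [hUexp, hVexp]
    exact Real.exp_le_exp.mpr hlog
  · -- PLarger → RecipMaj
    intro h j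
    show ∑ i ∈ Iic j, 1 / u i ≥ ∑ i ∈ Iic j, 1 / v i
    rw [ge_iff_le,
      bridge_sum (fun i => 1 / u i) (fun m => 1 / U m) (fun i => by rw [hU]) j,
      bridge_sum (fun i => 1 / v i) (fun m => 1 / V m) (fun i => by rw [hV]) j]
    have hp : ∀ j' ≤ j.1, ∏ i ∈ range (j' + 1), U i ≤ ∏ i ∈ range (j' + 1), V i := by
      intro j' hj'
      have := h ⟨j', by omega⟩
      rwa [bridge_prod u U hU ⟨j', by omega⟩, bridge_prod v V hV ⟨j', by omega⟩] at this
    exact recip_sum_le j.1 U V (fun i _ => hUpos i) (fun i _ => hVpos i)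
      (fun i j' hij hj' => hVmono i j' hij (by omega)) hp
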